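/- Let N ≥ 1, 1 < p < ∞ and q = p/(p−1). Let u ∈ L^p(ℝ^N) be nonnegative, let H ⊂ ℝ^N be a closed halfspace having 0 as an interior point, and let w ∈ L^q(ℝ^N) be nonnegative, radial and radially strictly decreasing. If ∫_{ℝ^N} u w = ∫_{ℝ^N} u^H w, then u = u^H almost everywhere. -/

import Mathlib

open MeasureTheory Filter
open scoped ENNReal

/-- Reflection across the boundary hyperplane `{x : ⟪a,x⟫ = b}` of the closed
halfspace `H = {x : ⟪a,x⟫ ≤ b}` (for `‖a‖ = 1`). -/
noncomputable def reflectH {N : ℕ} (a : EuclideanSpace ℝ (Fin N)) (b : ℝ)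
    (x : EuclideanSpace ℝ (Fin N)) : EuclideanSpace ℝ (Fin N) :=
  x - (2 * ((inner ℝ a x : ℝ) - b)) • a

/-- Polarization (two-point rearrangement) of `u` with respect to the closed halfspace
`H = {x : ⟪a,x⟫ ≤ b}` (for `‖a‖ = 1`). -/
noncomputable def polarization {N : ℕ} (a : EuclideanSpace ℝ (Fin N)) (b : ℝ)
    (u : EuclideanSpace ℝ (Fin N) → ℝ) (x : EuclideanSpace ℝ (Fin N)) : ℝ :=
  if (inner ℝ a x : ℝ) ≤ b then max (u x) (u (reflectH a b x))
  else min (u x) (u (reflectH a b x))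

section aux
variable {N : ℕ} {a : EuclideanSpace ℝ (Fin N)} {b : ℝ}

lemma inner_reflectH (ha : ‖a‖ = 1) (x : EuclideanSpace ℝ (Fin N)) :
    (inner ℝ a (reflectH a b x) : ℝ) = 2 * b - inner ℝ a x := by
  have h : (inner ℝ a a : ℝ) = 1 := by
    rw [real_inner_self_eq_norm_sq, ha]; norm_num
  rw [reflectH, inner_sub_right, real_inner_smul_right, h]
  ring

lemma reflectH_invol (ha : ‖a‖ = 1) (x : EuclideanSpace ℝ (Fin N)) :
    reflectH a b (reflectH a b x) = x := by
  have h := inner_reflectH (b := b) ha x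
  show reflectH a b x - (2 * ((inner ℝ a (reflectH a b x) : ℝ) - b)) • a = x
  rw [h, reflectH]
  have : (2 * (2 * b - (inner ℝ a x : ℝ) - b)) = -(2 * ((inner ℝ a x : ℝ) - b)) := by ring
  rw [this, neg_smul, sub_neg_eq_add, sub_add_cancel]

lemma reflectH_fixed {x : EuclideanSpace ℝ (Fin N)} (hx : (inner ℝ a x : ℝ) = b) :
    reflectH a b x = x := by
  simp [reflectH, hx]

lemma norm_sq_reflectH (ha : ‖a‖ = 1) (x : EuclideanSpace ℝ (Fin N)) :
    ‖reflectH a b x‖ ^ 2 = ‖x‖ ^ 2 + 4 * (b - (inner ℝ a x : ℝ)) * b := by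
  have haa : (inner ℝ a a : ℝ) = 1 := by
    rw [real_inner_self_eq_norm_sq, ha]; norm_num
  have h : ‖reflectH a b x‖ ^ 2 = (inner ℝ (reflectH a b x) (reflectH a b x) : ℝ) :=
    (real_inner_self_eq_norm_sq _).symm
  rw [h, reflectH, inner_sub_sub_self, real_inner_smul_right, real_inner_smul_left,
    real_inner_smul_left, real_inner_smul_right, haa, real_inner_comm x a,
    real_inner_self_eq_norm_sq]
  ring

lemma norm_lt_reflectH (ha : ‖a‖ = 1) (hb : 0 < b) {x : EuclideanSpace ℝ (Fin N)}
    (hx : (inner ℝ a x : ℝ) < b) : ‖x‖ < ‖reflectH a b x‖ := by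
  have h := norm_sq_reflectH (b := b) ha x
  have h2 : ‖x‖ ^ 2 < ‖reflectH a b x‖ ^ 2 := by nlinarith
  exact lt_of_pow_lt_pow_left₀ 2 (norm_nonneg _) h2

lemma continuous_reflectH : Continuous (reflectH a b) := by
  unfold reflectH
  fun_prop

lemma measurePreserving_reflectH (ha : ‖a‖ = 1) :
    MeasurePreserving (reflectH a b) volume volume := by
  have key : reflectH a b = (fun y => y + (2 * b) • a) ∘
      (((ℝ ∙ a).reflection).trans (LinearIsometryEquiv.neg ℝ)) := by
    funext x
    simp only [Function.comp_apply, LinearIsometryEquiv.trans_apply,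
      LinearIsometryEquiv.coe_neg, Submodule.reflection_apply, Submodule.starProjection_singleton, ha]
    rw [reflectH]
    push_cast
    rw [show ((1:ℝ)^2) = 1 by norm_num]
    rw [two_smul]
    simp only [div_one, one_smul]
    module
  rw [key]
  exact (measurePreserving_add_right volume ((2 * b) • a)).comp
    ((((ℝ ∙ a).reflection).trans (LinearIsometryEquiv.neg ℝ)).measurePreserving)

lemma measurableEmbedding_reflectH (ha : ‖a‖ = 1) :
    MeasurableEmbedding (reflectH a b) := by
  have hm : Measurable (reflectH a b) := continuous_reflectH.measurable
  exact (MeasurableEquiv.mk ⟨reflectH a b, reflectH a b, reflectH_invol ha, reflectH_invol ha⟩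
    hm hm).measurableEmbedding

/-- `polarization + polarization ∘ reflect = u + u ∘ reflect`. -/
lemma polarization_add_reflect (ha : ‖a‖ = 1) (u : EuclideanSpace ℝ (Fin N) → ℝ)
    (x : EuclideanSpace ℝ (Fin N)) :
    polarization a b u (reflectH a b x) = u x + u (reflectH a b x) - polarization a b u x := by
  have hinv := reflectH_invol (b := b) ha x
  have hir := inner_reflectH (b := b) ha x
  rcases lt_trichotomy ((inner ℝ a x : ℝ)) b with h | h | h
  · have h1 : ¬ ((inner ℝ a (reflectH a b x) : ℝ) ≤ b) := by rw [hir]; linarith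
    simp only [polarization, if_pos h.le, if_neg h1, hinv]
    rcases le_total (u x) (u (reflectH a b x)) with h2 | h2 <;>
      simp [max_eq_right, max_eq_left, min_eq_left, min_eq_right, h2] <;> ring
  · rw [reflectH_fixed h]
    simp [polarization, if_pos h.le, reflectH_fixed h]
  · have h1 : (inner ℝ a (reflectH a b x) : ℝ) ≤ b := by rw [hir]; linarith
    simp only [polarization, if_pos h1, if_neg (not_le.mpr h), hinv]
    rcases le_total (u x) (u (reflectH a b x)) with h2 | h2 <;>
      simp [max_eq_right, max_eq_left, min_eq_left, min_eq_right, h2] <;> ring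

end aux

/-- For nonnegative `u ∈ L^p(ℝ^N)`, a closed halfspace
`H = {x : ⟪a,x⟫ ≤ b}` having `0` as interior point (i.e. `b > 0`), and a nonnegative, radial and
radially strictly decreasing `w ∈ L^q(ℝ^N)` (`q = p/(p-1)`), equality `∫ u w = ∫ u^H w`
implies `u = u^H` almost everywhere. -/
theorem statement2 {N : ℕ} (hN : 1 ≤ N) (p q : ℝ) (hp : 1 < p) (hq : q = p / (p - 1))
    (u : EuclideanSpace ℝ (Fin N) → ℝ)
    (hu : MemLp u (ENNReal.ofReal p) volume) (hu0 : ∀ x, 0 ≤ u x)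
    (a : EuclideanSpace ℝ (Fin N)) (b : ℝ) (ha : ‖a‖ = 1) (hb : 0 < b)
    (w : EuclideanSpace ℝ (Fin N) → ℝ)
    (hw : MemLp w (ENNReal.ofReal q) volume) (hw0 : ∀ x, 0 ≤ w x)
    (W : ℝ → ℝ) (hW : StrictAntiOn W (Set.Ici 0)) (hwW : ∀ x, w x = W ‖x‖)
    (heq : ∫ x, u x * w x = ∫ x, polarization a b u x * w x) :
    u =ᵐ[volume] polarization a b u := by
  set σ : EuclideanSpace ℝ (Fin N) → EuclideanSpace ℝ (Fin N) := reflectH a b with hσdef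
  have hσmp : MeasurePreserving σ volume volume := measurePreserving_reflectH ha
  have hσemb : MeasurableEmbedding σ := measurableEmbedding_reflectH ha
  have hp0 : 0 < p := lt_trans one_pos hp
  have hq0 : 0 < q := by rw [hq]; exact div_pos hp0 (by linarith)
  -- conjugate exponents in ℝ≥0∞
  have hPQ : (1 : ℝ≥0∞) / 1 = 1 / ENNReal.ofReal p + 1 / ENNReal.ofReal q := by
    have h1 : (ENNReal.ofReal p)⁻¹ = ENNReal.ofReal p⁻¹ :=
      (ENNReal.ofReal_inv_of_pos hp0).symm
    have h2 : (ENNReal.ofReal q)⁻¹ = ENNReal.ofReal q⁻¹ :=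
      (ENNReal.ofReal_inv_of_pos hq0).symm
    have h3 : p⁻¹ + q⁻¹ = 1 := by
      rw [hq]; field_simp; ring
    rw [one_div, one_div, one_div, h1, h2, ← ENNReal.ofReal_add (by positivity) (by positivity),
      h3, ENNReal.ofReal_one, inv_one]
  -- measurable representative of u
  set g : EuclideanSpace ℝ (Fin N) → ℝ := hu.1.mk u with hgdef
  have hg : StronglyMeasurable g := hu.1.stronglyMeasurable_mk
  have hug : u =ᵐ[volume] g := hu.1.ae_eq_mk
  have hugσ : (fun x => u (σ x)) =ᵐ[volume] fun x => g (σ x) := by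
    have h0 : volume {y | ¬ u y = g y} = 0 := ae_iff.mp hug
    exact ae_iff.mpr (hσmp.quasiMeasurePreserving.preimage_null h0)
  have hupol : polarization a b u =ᵐ[volume] polarization a b g := by
    filter_upwards [hug, hugσ] with x h1 h2
    simp only [polarization, ← hσdef, h1, h2]
  -- MemLp facts
  have hgp : MemLp g (ENNReal.ofReal p) volume := hu.ae_eq hug
  have hgσp : MemLp (g ∘ σ) (ENNReal.ofReal p) volume := hgp.comp_measurePreserving hσmp
  have hpolg_sm : StronglyMeasurable (polarization a b g) := by
    apply Measurable.stronglyMeasurable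
    have hset : MeasurableSet {x : EuclideanSpace ℝ (Fin N) | (inner ℝ a x : ℝ) ≤ b} :=
      measurableSet_le (Continuous.measurable (Continuous.inner continuous_const continuous_id))
        measurable_const
    exact Measurable.ite hset
      (hg.measurable.max (hg.measurable.comp continuous_reflectH.measurable))
      (hg.measurable.min (hg.measurable.comp continuous_reflectH.measurable))
  have hpolg : MemLp (polarization a b g) (ENNReal.ofReal p) volume := by
    refine MemLp.of_le (hgp.norm.add hgσp.norm) hpolg_sm.aestronglyMeasurable
      (ae_of_all _ fun x => ?_)
    have hb1 : ‖polarization a b g x‖ ≤ ‖g x‖ + ‖g (σ x)‖ := by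
      rw [Real.norm_eq_abs, Real.norm_eq_abs, Real.norm_eq_abs]
      rw [polarization, ← hσdef]
      split
      · apply abs_le.mpr
        constructor
        · have := neg_abs_le (g x); have := abs_nonneg (g (σ x))
          have := le_max_left (g x) (g (σ x)); linarith
        · exact max_le (by have := le_abs_self (g x); have := abs_nonneg (g (σ x)); linarith)
            (by have := le_abs_self (g (σ x)); have := abs_nonneg (g x); linarith)
      · apply abs_le.mpr
        constructor
        · exact le_min (by have := neg_abs_le (g x); have := abs_nonneg (g (σ x)); linarith)
            (by have := neg_abs_le (g (σ x)); have := abs_nonneg (g x); linarith)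
        · have := le_abs_self (g x); have := abs_nonneg (g (σ x))
          have := min_le_left (g x) (g (σ x)); linarith
    calc ‖polarization a b g x‖ ≤ ‖g x‖ + ‖g (σ x)‖ := hb1
      _ ≤ ‖‖g x‖ + ‖g (σ x)‖‖ := le_abs_self _
  have hpolu : MemLp (polarization a b u) (ENNReal.ofReal p) volume := hpolg.ae_eq hupol.symm
  have hwσ : MemLp (w ∘ σ) (ENNReal.ofReal q) volume := hw.comp_measurePreserving hσmp
  -- integrability of products (Hölder)
  have hmul : ∀ (f : EuclideanSpace ℝ (Fin N) → ℝ), MemLp f (ENNReal.ofReal p) volume →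
      ∀ (v : EuclideanSpace ℝ (Fin N) → ℝ), MemLp v (ENNReal.ofReal q) volume →
      Integrable (fun x => f x * v x) volume := by
    intro f hf v hv
    have : ENNReal.HolderTriple (ENNReal.ofReal p) (ENNReal.ofReal q) 1 :=
      ⟨by simpa only [one_div, inv_one] using hPQ.symm⟩
    have := memLp_one_iff_integrable.mp (MemLp.smul (r := 1) hv hf)
    exact this
  have huw : Integrable (fun x => u x * w x) volume := hmul u hu w hw
  have hpolw : Integrable (fun x => polarization a b u x * w x) volume := hmul _ hpolu w hw
  have huwσ : Integrable (fun x => u x * w (σ x)) volume := hmul u hu (w ∘ σ) hwσ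
  have hpolwσ : Integrable (fun x => polarization a b u x * w (σ x)) volume :=
    hmul _ hpolu (w ∘ σ) hwσ
  -- the function F = (pol - u) * w  and its friends
  set F : EuclideanSpace ℝ (Fin N) → ℝ := fun x => (polarization a b u x - u x) * w x with hFdef
  have hF : Integrable F volume := by
    have := hpolw.sub huw
    simp only [hFdef, sub_mul]; exact this
  have hFσint : Integrable (fun x => (polarization a b u x - u x) * w (σ x)) volume := by
    have := hpolwσ.sub huwσ
    simp only [sub_mul]; exact this
  have hF0 : ∫ x, F x = 0 := by
    have : ∫ x, F x = (∫ x, polarization a b u x * w x) - ∫ x, u x * w x := by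
      rw [hFdef]
      simp only [sub_mul]
      exact integral_sub hpolw huw
    rw [this, ← heq, sub_self]
  -- sets
  set s : Set (EuclideanSpace ℝ (Fin N)) := {x | (inner ℝ a x : ℝ) ≤ b} with hsdef
  set t : Set (EuclideanSpace ℝ (Fin N)) := {x | (inner ℝ a x : ℝ) < b} with htdef
  have hinnerm : Measurable (fun x : EuclideanSpace ℝ (Fin N) => (inner ℝ a x : ℝ)) :=
    (Continuous.inner continuous_const continuous_id).measurable
  have hs : MeasurableSet s := measurableSet_le hinnerm measurable_const
  have ht : MeasurableSet t := measurableSet_lt hinnerm measurable_const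
  -- F vanishes on the hyperplane
  have hFhyp : ∀ x, (inner ℝ a x : ℝ) = b → F x = 0 := by
    intro x hx
    have : polarization a b u x = u x := by
      simp [polarization, hx.le, ← hσdef, reflectH_fixed hx]
    simp [hFdef, this]
  -- split the integral
  have hsplit : (∫ x in s, F x) + (∫ x in sᶜ, F x) = 0 := by
    rw [integral_add_compl hs hF]; exact hF0
  -- ∫_s F = ∫_t F
  have hst : (∫ x in s, F x) = ∫ x in t, F x := by
    rw [← integral_indicator hs, ← integral_indicator ht]
    congr 1
    funext x
    by_cases h1 : (inner ℝ a x : ℝ) < b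
    · have hxs : x ∈ s := le_of_lt h1
      have hxt : x ∈ t := h1
      rw [Set.indicator_of_mem hxs, Set.indicator_of_mem hxt]
    · by_cases h2 : (inner ℝ a x : ℝ) ≤ b
      · have hxs : x ∈ s := h2
        have hxt : x ∉ t := h1
        rw [Set.indicator_of_mem hxs, Set.indicator_of_notMem hxt,
          hFhyp x (le_antisymm h2 (not_lt.mp h1))]
      · have hxs : x ∉ s := h2
        have hxt : x ∉ t := h1
        rw [Set.indicator_of_notMem hxs, Set.indicator_of_notMem hxt]
  -- change of variables on sᶜ
  have hpre : σ ⁻¹' sᶜ = t := by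
    ext x
    simp only [Set.mem_preimage, Set.mem_compl_iff, hsdef, htdef, Set.mem_setOf_eq, hσdef,
      inner_reflectH ha, not_le]
    constructor <;> intro h <;> linarith
  have hFrefl : ∀ x, F (σ x) = -((polarization a b u x - u x) * w (σ x)) := by
    intro x
    have := polarization_add_reflect (b := b) ha u x
    rw [← hσdef] at this
    simp only [hFdef, ← hσdef, this]
    ring
  have hcompl : (∫ x in sᶜ, F x) = -∫ x in t, (polarization a b u x - u x) * w (σ x) := by
    rw [← hσmp.setIntegral_preimage_emb hσemb F sᶜ, hpre]
    rw [← integral_neg]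
    exact integral_congr_ae (ae_of_all _ fun x => by simpa using hFrefl x)
  -- combine: ∫_t (pol - u) (w - w∘σ) = 0
  set G : EuclideanSpace ℝ (Fin N) → ℝ :=
    fun x => (polarization a b u x - u x) * (w x - w (σ x)) with hGdef
  have hG : Integrable G volume := by
    have h := hF.sub hFσint
    have : G = fun x => F x - (polarization a b u x - u x) * w (σ x) := by
      funext x; simp only [hGdef, hFdef]; ring
    rw [this]; exact h
  have hGt0 : (∫ x in t, G x) = 0 := by
    have h1 : (∫ x in t, G x) = (∫ x in t, F x) -
        ∫ x in t, (polarization a b u x - u x) * w (σ x) := by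
      have : ∀ x, G x = F x - (polarization a b u x - u x) * w (σ x) := by
        intro x; simp only [hGdef, hFdef]; ring
      rw [integral_congr_ae (ae_of_all _ fun x => this x)]
      exact integral_sub hF.integrableOn hFσint.integrableOn
    rw [h1, ← hst]
    have := hsplit
    rw [hcompl] at this
    linarith
  -- nonnegativity of G on t
  have hGnn : ∀ x ∈ t, 0 ≤ G x := by
    intro x hx
    have hx' : (inner ℝ a x : ℝ) < b := hx
    have h1 : 0 ≤ polarization a b u x - u x := by
      simp only [polarization, if_pos hx'.le, ← hσdef, sub_nonneg]
      exact le_max_left _ _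
    have h2 : 0 < w x - w (σ x) := by
      rw [hwW x, hwW (σ x)]
      have hlt : ‖x‖ < ‖σ x‖ := norm_lt_reflectH ha hb hx'
      have := hW (Set.mem_Ici.mpr (norm_nonneg x)) (Set.mem_Ici.mpr (norm_nonneg (σ x))) hlt
      linarith
    exact mul_nonneg h1 h2.le
  -- conclude G = 0 a.e. on t
  have hGz : ∀ᵐ x ∂volume, x ∈ t → G x = 0 := by
    have hnn : 0 ≤ᵐ[volume.restrict t] G :=
      (ae_restrict_iff' ht).mpr (ae_of_all _ hGnn)
    have := (setIntegral_eq_zero_iff_of_nonneg_ae hnn hG.integrableOn).mp hGt0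
    exact (ae_restrict_iff' ht).mp this
  -- hence pol - u = 0 a.e. on t
  have hfz : ∀ᵐ x ∂volume, x ∈ t → polarization a b u x - u x = 0 := by
    filter_upwards [hGz] with x hx hxt
    have h2 : 0 < w x - w (σ x) := by
      rw [hwW x, hwW (σ x)]
      have hlt : ‖x‖ < ‖σ x‖ := norm_lt_reflectH ha hb hxt
      have := hW (Set.mem_Ici.mpr (norm_nonneg x)) (Set.mem_Ici.mpr (norm_nonneg (σ x))) hlt
      linarith
    have := hx hxt
    rcases mul_eq_zero.mp this with h | h
    · exact h
    · exact absurd h (ne_of_gt h2)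
  -- globalize
  have hAt : volume {x | x ∈ t ∧ polarization a b u x - u x ≠ 0} = 0 := by
    have := ae_iff.mp hfz
    convert this using 2
    ext x
    simp only [Classical.not_imp]
  have hAgt : volume {x | b < (inner ℝ a x : ℝ) ∧ polarization a b u x - u x ≠ 0} = 0 := by
    refine measure_mono_null (?_ : _ ⊆ σ ⁻¹' {x | x ∈ t ∧ polarization a b u x - u x ≠ 0}) (hσmp.quasiMeasurePreserving.preimage_null hAt)
    · intro x hx
      obtain ⟨hx1, hx2⟩ := hx
      have h1 : σ x ∈ t := by
        simp only [htdef, Set.mem_setOf_eq, hσdef, inner_reflectH ha]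
        linarith
      have h2 : polarization a b u (σ x) - u (σ x) ≠ 0 := by
        have := polarization_add_reflect (b := b) ha u x
        rw [← hσdef] at this
        intro hcon
        apply hx2
        rw [this] at hcon
        linarith [hcon]
      exact ⟨h1, h2⟩
  apply ae_iff.mpr
  refine measure_mono_null (?_ : _ ⊆ {x | x ∈ t ∧ polarization a b u x - u x ≠ 0} ∪
    {x | b < (inner ℝ a x : ℝ) ∧ polarization a b u x - u x ≠ 0})
    (measure_union_null hAt hAgt)
  · intro x hx
    simp only [Set.mem_setOf_eq] at hx
    have hne : polarization a b u x - u x ≠ 0 := sub_ne_zero.mpr (Ne.symm hx)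
    rcases lt_trichotomy ((inner ℝ a x : ℝ)) b with h | h | h
    · exact Or.inl ⟨h, hne⟩
    · exact absurd (by simp [polarization, h.le, ← hσdef, reflectH_fixed h] : polarization a b u x = u x)
        (fun hc => hx hc.symm)
    · exact Or.inr ⟨h, hne⟩
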